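/- arXiv:1710.01071 — 2 statements merged into one kernel-verified Lean document; each statement's English description precedes it below -/
import Mathlib

section
/- For n ≥ 1 the generalized Hecke operators at the prime 2 satisfy T_{2^n} ∘ T_2 = T_{2^{n+1}} + 2·T_{2^n} ∘ Ψ_{√2} + 2·T_{2^{n-1}} ∘ Ψ_2, where Ψ_u(h) = h ∥ [[u,0],[0,u]]. -/
noncomputable section

/-- The coefficient ring `K = 𝓛[…, x_m^{[r]}, …]` with `𝓛 = ℂ` (which contains all
roots of unity), one variable `x_m^{[r]}` for each `m ∈ ℕ` and real index `r`
(the indices used are `r ∈ ℕ ∪ √2·ℕ`). -/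
abbrev RepRing := MvPolynomial (ℕ × ℝ) ℂ

/-- The endomorphism `ψ_u` of `K` sending `x_m^{[r]}` to `x_m^{[ru]}`. -/
def psiK (u : ℝ) : RepRing →ₐ[ℂ] RepRing :=
  MvPolynomial.rename (fun p => (p.1, p.2 * u))

/-- A formal series `Σ_e c_e q^e` with exponents `e ∈ ℚ` and coefficients in `K`,
recorded by its coefficient function. -/
abbrev FormalSeries := ℚ → RepRing

/-- The slash action of `α = s·[[u, v],[0, y]]` (with `s > 0` a real scalar, typically
`1` or `√2`, and `u, v, y` rational): `x_m^{[r]} ↦ x_m^{[r·su]}`, and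
`q^e ↦ e^{2πive/y}·q^{ue/y}`.  In terms of coefficient functions, the coefficient of
`q^{e'}` of `h ∥ α` is `e^{2πive'/u}·ψ_{su}(c_{e'y/u})`. -/
def slashA (h : FormalSeries) (s : ℝ) (u v y : ℚ) : FormalSeries := fun e' =>
  Complex.exp (2 * (Real.pi : ℂ) * Complex.I * ((v * e' / u : ℚ) : ℂ)) •
    psiK (s * (u : ℝ)) (h (e' * y / u))

/-- The generalized Hecke operator
`T_n h = Σ_{uy=n, 0≤v<y} h ∥ [[u,v],[0,y]] + Σ_{uy=n/2, 0≤v<2y} h ∥ [[√2u, v/√2],[0,√2y]]`,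
the second sum being present only when `n` is even.  Note
`[[√2u, v/√2],[0,√2y]] = √2·[[u, v/2],[0,y]]`. -/
def heckeT (n : ℕ) (h : FormalSeries) : FormalSeries :=
  (∑ x ∈ n.divisorsAntidiagonal, ∑ v ∈ Finset.range x.2,
    slashA h 1 (x.1 : ℚ) (v : ℚ) (x.2 : ℚ))
  + (if Even n then
      ∑ x ∈ (n / 2).divisorsAntidiagonal, ∑ v ∈ Finset.range (2 * x.2),
        slashA h (Real.sqrt 2) (x.1 : ℚ) ((v : ℚ) / 2) (x.2 : ℚ)
    else 0)

/-- `h` is a formal series supported on integer exponents (e.g. `q^{-1} + Σ_{m≥1} c_m q^m`). -/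
def IntSupported (h : FormalSeries) : Prop :=
  ∀ e : ℚ, (∀ z : ℤ, (z : ℚ) ≠ e) → h e = 0

/-- `Ψ_u h = h ∥ [[u,0],[0,u]]`, for `u = √2` (realized as `√2·[[1,0],[0,1]]`). -/
def PsiSqrtTwo (h : FormalSeries) : FormalSeries := slashA h (Real.sqrt 2) 1 0 1

/-- `Ψ_2 h = h ∥ [[2,0],[0,2]]`. -/
def PsiTwo (h : FormalSeries) : FormalSeries := slashA h 1 2 0 2

lemma psiK_psiK (a b : ℝ) (p : RepRing) : psiK a (psiK b p) = psiK (b * a) p := by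
  simp only [psiK, MvPolynomial.rename_rename]
  rw [show (((fun p : ℕ × ℝ => (p.1, p.2 * a)) ∘ fun p : ℕ × ℝ => (p.1, p.2 * b)))
      = fun p : ℕ × ℝ => (p.1, p.2 * (b * a)) from funext fun p => by
    simp [Function.comp, mul_assoc]]

lemma slash_add (g1 g2 : FormalSeries) (s : ℝ) (u v y : ℚ) :
    slashA (g1 + g2) s u v y = slashA g1 s u v y + slashA g2 s u v y := by
  funext e'
  simp [slashA, smul_add]

lemma slash_slash (h : FormalSeries) (s1 s2 : ℝ) (u1 v1 y1 u2 v2 y2 : ℚ)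
    (hu1 : u1 ≠ 0) (hu2 : u2 ≠ 0) :
    slashA (slashA h s1 u1 v1 y1) s2 u2 v2 y2
      = slashA h (s1 * s2) (u1 * u2) (u1 * v2 + v1 * y2) (y1 * y2) := by
  funext e'
  simp only [slashA, map_smul, smul_smul, psiK_psiK]
  rw [← Complex.exp_add]
  congr 2
  · have hq : v2 * e' / u2 + v1 * (e' * y2 / u2) / u1 = (u1 * v2 + v1 * y2) * e' / (u1 * u2) := by
      field_simp
    rw [← mul_add, ← Rat.cast_add, hq]
  · push_cast
    ring
  · field_simp

lemma slash_two (h : FormalSeries) (u v y : ℚ) :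
    slashA h 2 u v y = slashA h 1 (2 * u) (2 * v) (2 * y) := by
  funext e'
  simp only [slashA]
  rw [show ((2:ℚ) * v) * e' / (2 * u) = v * e' / u by rw [mul_assoc, mul_div_mul_left _ _ (two_ne_zero)],
    show e' * (2 * y) / (2 * u) = e' * y / u by rw [mul_comm (2:ℚ) y, ← mul_assoc, mul_comm (e'*y) 2, mul_div_mul_left _ _ (two_ne_zero)]]
  congr 2
  push_cast
  ring

lemma slash_period (h : FormalSeries) (hsupp : IntSupported h) (s : ℝ) (u v y : ℚ) (z : ℤ)
    (e' : ℚ) :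
    slashA h s u (v + z * y) y e' = slashA h s u v y e' := by
  rcases eq_or_ne u 0 with rfl | hu
  · simp [slashA]
  by_cases h0 : h (e' * y / u) = 0
  · simp [slashA, h0]
  obtain ⟨z₀, hz₀⟩ : ∃ z₀ : ℤ, (z₀ : ℚ) = e' * y / u := by
    by_contra hc
    push_neg at hc
    exact h0 (hsupp _ hc)
  simp only [slashA]
  congr 1
  have harg : ((v + z * y) * e' / u : ℚ) = v * e' / u + (z * z₀ : ℤ) := by
    push_cast [hz₀]
    field_simp
  rw [harg]
  push_cast
  rw [mul_add, Complex.exp_add]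
  rw [show 2 * (Real.pi:ℂ) * Complex.I * ((z:ℂ) * (z₀:ℂ)) = ((z*z₀ : ℤ):ℂ) * (2 * (Real.pi:ℂ) * Complex.I) by push_cast; ring]
  rw [Complex.exp_int_mul_two_pi_mul_I]
  ring

lemma divAnti_pow_two (k : ℕ) :
    (2 ^ k).divisorsAntidiagonal
      = (Finset.range (k + 1)).image (fun a => (2 ^ a, 2 ^ (k - a))) := by
  ext ⟨u, y⟩
  simp only [Nat.mem_divisorsAntidiagonal, Finset.mem_image, Finset.mem_range, Nat.lt_succ_iff,
    Prod.mk.injEq]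
  constructor
  · rintro ⟨huy, -⟩
    have hu : u ∣ 2 ^ k := Dvd.intro y huy
    obtain ⟨a, ha, rfl⟩ := (Nat.dvd_prime_pow Nat.prime_two).mp hu
    refine ⟨a, ha, rfl, ?_⟩
    have : 2 ^ a * y = 2 ^ a * 2 ^ (k - a) := by
      rw [huy, ← pow_add, Nat.add_sub_cancel' ha]
    exact (Nat.eq_of_mul_eq_mul_left (by positivity) this).symm
  · rintro ⟨a, ha, rfl, rfl⟩
    exact ⟨by rw [← pow_add, Nat.add_sub_cancel' ha], by positivity⟩

lemma sum_divAnti (k : ℕ) {M : Type*} [AddCommMonoid M] (f : ℕ × ℕ → M) :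
    ∑ x ∈ (2 ^ k).divisorsAntidiagonal, f x
      = ∑ a ∈ Finset.range (k + 1), f (2 ^ a, 2 ^ (k - a)) := by
  rw [divAnti_pow_two, Finset.sum_image]
  intro a _ b _ hab
  exact Nat.pow_right_injective le_rfl (congrArg Prod.fst hab)
section Core
variable {M : Type*} [AddCommMonoid M]

lemma Hshift (F : ℚ → ℚ → ℚ → M) (hF : ∀ u v y : ℚ, F u (v + y) y = F u v y)
    (u d y : ℚ) (N : ℕ) (hd : (N : ℚ) = d) (hy : d + d = y) :
    ∑ c ∈ Finset.range (2 * N), F u ((c : ℚ) + d) y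
      = ∑ c ∈ Finset.range (2 * N), F u (c : ℚ) y := by
  rw [two_mul, Finset.sum_range_add, Finset.sum_range_add, add_comm]
  congr 1
  · apply Finset.sum_congr rfl
    intro c _
    rw [show ((N + c : ℕ) : ℚ) + d = ((c : ℚ) + y) by push_cast [← hy, ← hd]; ring, hF]
  · apply Finset.sum_congr rfl
    intro c _
    rw [show ((N + c : ℕ) : ℚ) = ((c : ℚ) + d) by push_cast [← hd]; ring]

lemma Hdouble (F : ℚ → ℚ → ℚ → M) (hF : ∀ u v y : ℚ, F u (v + y) y = F u v y)
    (u d y : ℚ) (N : ℕ) (hy : d * N = y) :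
    ∑ c ∈ Finset.range (2 * N), F u (d * (c : ℚ)) y
      = 2 • ∑ c ∈ Finset.range N, F u (d * (c : ℚ)) y := by
  rw [two_mul, Finset.sum_range_add, two_smul]
  congr 1
  apply Finset.sum_congr rfl
  intro c _
  rw [show d * ((N + c : ℕ) : ℚ) = d * (c : ℚ) + y by push_cast [← hy]; ring, hF]

lemma Hdouble1 (F : ℚ → ℚ → ℚ → M) (hF : ∀ u v y : ℚ, F u (v + y) y = F u v y)
    (u y : ℚ) (N : ℕ) (hy : (N : ℚ) = y) :
    ∑ c ∈ Finset.range (2 * N), F u (c : ℚ) y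
      = 2 • ∑ c ∈ Finset.range N, F u (c : ℚ) y := by
  rw [two_mul, Finset.sum_range_add, two_smul]
  congr 1
  apply Finset.sum_congr rfl
  intro c _
  rw [show ((N + c : ℕ) : ℚ) = ((c : ℚ) + y) by push_cast [← hy]; ring, hF]

end Core

section Core2
variable {M : Type*} [AddCommMonoid M]

set_option maxHeartbeats 1000000 in
lemma coreId (F G : ℚ → ℚ → ℚ → M)
    (hF : ∀ u v y : ℚ, F u (v + y) y = F u v y)
    (hG : ∀ u v y : ℚ, G u (v + y) y = G u v y) (m : ℕ) :
    ∑ x ∈ Finset.range (m + 1 + 1),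
              ∑ c ∈ Finset.range (2 ^ (m + 1 - x)), F (2 ^ x) (c : ℚ) (2 * 2 ^ (m + 1 - x)) +
            ∑ x ∈ Finset.range (m + 1),
              ∑ c ∈ Finset.range (2 ^ (m + 1 - x)), G (2 ^ x) ((c : ℚ) / 2) (2 * 2 ^ (m - x)) +
          (∑ x ∈ Finset.range (m + 1 + 1),
              ∑ c ∈ Finset.range (2 ^ (m + 1 - x)),
                F (2 ^ x) ((c : ℚ) + 2 ^ (m + 1 - x)) (2 * 2 ^ (m + 1 - x)) +
            ∑ x ∈ Finset.range (m + 1),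
              ∑ c ∈ Finset.range (2 ^ (m + 1 - x)),
                G (2 ^ x) ((c : ℚ) / 2 + 2 ^ (m - x)) (2 * 2 ^ (m - x))) +
        (∑ x ∈ Finset.range (m + 1 + 1),
            ∑ c ∈ Finset.range (2 ^ (m + 1 - x)), F (2 * 2 ^ x) (2 * (c : ℚ)) (2 ^ (m + 1 - x)) +
          ∑ x ∈ Finset.range (m + 1),
            ∑ c ∈ Finset.range (2 ^ (m + 1 - x)), G (2 * 2 ^ x) (2 * ((c : ℚ) / 2)) (2 ^ (m - x))) +
      (∑ x ∈ Finset.range (m + 1 + 1),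
            ∑ c ∈ Finset.range (2 ^ (m + 1 - x)), G (2 ^ x) (c : ℚ) (2 ^ (m + 1 - x)) +
          ∑ x ∈ Finset.range (m + 1),
            ∑ c ∈ Finset.range (2 ^ (m + 1 - x)), F (2 * 2 ^ x) (2 * ((c : ℚ) / 2)) (2 * 2 ^ (m - x)) +
        (∑ x ∈ Finset.range (m + 1 + 1),
            ∑ c ∈ Finset.range (2 ^ (m + 1 - x)),
              G (2 ^ x) ((c : ℚ) + 1 / 2 * 2 ^ (m + 1 - x)) (2 ^ (m + 1 - x)) +
          ∑ x ∈ Finset.range (m + 1),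
            ∑ c ∈ Finset.range (2 ^ (m + 1 - x)),
              F (2 * 2 ^ x) (2 * ((c : ℚ) / 2 + 1 / 2 * 2 ^ (m - x))) (2 * 2 ^ (m - x)))) =
    ∑ x ∈ Finset.range (m + 1 + 1 + 1),
            ∑ c ∈ Finset.range (2 ^ (m + 1 + 1 - x)), F (2 ^ x) (c : ℚ) (2 ^ (m + 1 + 1 - x)) +
          ∑ x ∈ Finset.range (m + 1 + 1),
            ∑ c ∈ Finset.range (2 ^ (m + 1 + 1 - x)), G (2 ^ x) ((c : ℚ) / 2) (2 ^ (m + 1 - x)) +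
        2 •
          (∑ x ∈ Finset.range (m + 1 + 1),
              ∑ c ∈ Finset.range (2 ^ (m + 1 - x)), G (2 ^ x) (c : ℚ) (2 ^ (m + 1 - x)) +
            ∑ x ∈ Finset.range (m + 1),
              ∑ c ∈ Finset.range (2 ^ (m + 1 - x)), F (2 * 2 ^ x) (2 * ((c : ℚ) / 2)) (2 * 2 ^ (m - x))) +
      2 •
        (∑ x ∈ Finset.range (m + 1),
            ∑ c ∈ Finset.range (2 ^ (m - x)), F (2 * 2 ^ x) (2 * (c : ℚ)) (2 * 2 ^ (m - x)) +
          ∑ x ∈ Finset.range m,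
            ∑ c ∈ Finset.range (2 ^ (m - x)), G (2 * 2 ^ x) (2 * ((c : ℚ) / 2)) (2 * 2 ^ (m - 1 - x))) := by
  -- abbreviations for target pieces
  have hR1 : (∑ x ∈ Finset.range (m + 1 + 1 + 1),
        ∑ c ∈ Finset.range (2 ^ (m + 1 + 1 - x)), F (2 ^ x) (c : ℚ) (2 ^ (m + 1 + 1 - x)))
      = (∑ x ∈ Finset.range (m + 1 + 1),
          ∑ c ∈ Finset.range (2 ^ (m + 1 - x)), F (2 ^ x) (c : ℚ) (2 * 2 ^ (m + 1 - x)))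
        + (∑ x ∈ Finset.range (m + 1 + 1),
          ∑ c ∈ Finset.range (2 ^ (m + 1 - x)),
            F (2 ^ x) ((c : ℚ) + 2 ^ (m + 1 - x)) (2 * 2 ^ (m + 1 - x)))
        + F (2 ^ (m + 1 + 1)) 0 1 := by
    rw [Finset.sum_range_succ, ← Finset.sum_add_distrib]
    congr 1
    · apply Finset.sum_congr rfl
      intro x hx
      have hx' : x ≤ m + 1 := Nat.lt_succ_iff.mp (Finset.mem_range.mp hx)
      rw [show m + 1 + 1 - x = (m + 1 - x) + 1 by omega,
        show (2 : ℕ) ^ ((m + 1 - x) + 1) = 2 ^ (m + 1 - x) + 2 ^ (m + 1 - x) by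
          rw [pow_succ, mul_two], Finset.sum_range_add]
      congr 1
      · apply Finset.sum_congr rfl
        intro c _
        rw [show ((2 : ℚ) ^ ((m + 1 - x) + 1)) = 2 * 2 ^ (m + 1 - x) by ring]
      · apply Finset.sum_congr rfl
        intro c _
        rw [show ((2 ^ (m + 1 - x) + c : ℕ) : ℚ) = ((c : ℚ) + (2 : ℚ) ^ (m + 1 - x)) by
            push_cast; ring,
          show ((2 : ℚ) ^ ((m + 1 - x) + 1)) = 2 * 2 ^ (m + 1 - x) by ring]
    · rw [Nat.sub_self]
      norm_num
  have hR2 : (∑ x ∈ Finset.range (m + 1 + 1),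
        ∑ c ∈ Finset.range (2 ^ (m + 1 + 1 - x)), G (2 ^ x) ((c : ℚ) / 2) (2 ^ (m + 1 - x)))
      = (∑ x ∈ Finset.range (m + 1),
          ∑ c ∈ Finset.range (2 ^ (m + 1 - x)), G (2 ^ x) ((c : ℚ) / 2) (2 * 2 ^ (m - x)))
        + (∑ x ∈ Finset.range (m + 1),
          ∑ c ∈ Finset.range (2 ^ (m + 1 - x)),
            G (2 ^ x) ((c : ℚ) / 2 + 2 ^ (m - x)) (2 * 2 ^ (m - x)))
        + (G (2 ^ (m + 1)) 0 1 + G (2 ^ (m + 1)) (1 / 2) 1) := by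
    rw [Finset.sum_range_succ, ← Finset.sum_add_distrib]
    congr 1
    · apply Finset.sum_congr rfl
      intro x hx
      have hx' : x ≤ m := Nat.lt_succ_iff.mp (Finset.mem_range.mp hx)
      rw [show m + 1 + 1 - x = (m + 1 - x) + 1 by omega,
        show (2 : ℕ) ^ ((m + 1 - x) + 1) = 2 ^ (m + 1 - x) + 2 ^ (m + 1 - x) by
          rw [pow_succ, mul_two], Finset.sum_range_add]
      congr 1
      · apply Finset.sum_congr rfl
        intro c _
        rw [show ((2 : ℚ) ^ (m + 1 - x)) = 2 * 2 ^ (m - x) by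
          rw [show m + 1 - x = (m - x) + 1 by omega]; ring]
      · apply Finset.sum_congr rfl
        intro c _
        rw [show ((2 ^ (m + 1 - x) + c : ℕ) : ℚ) / 2 = ((c : ℚ) / 2 + (2 : ℚ) ^ (m - x)) by
            push_cast
            rw [show m + 1 - x = (m - x) + 1 by omega]
            ring,
          show ((2 : ℚ) ^ (m + 1 - x)) = 2 * 2 ^ (m - x) by
            rw [show m + 1 - x = (m - x) + 1 by omega]; ring]
    · rw [show m + 1 + 1 - (m + 1) = 1 by omega, Nat.sub_self, pow_one,
        Finset.sum_range_succ, Finset.sum_range_one]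
      norm_num
  have hD1 : (∑ x ∈ Finset.range (m + 1 + 1),
        ∑ c ∈ Finset.range (2 ^ (m + 1 - x)), G (2 ^ x) (c : ℚ) (2 ^ (m + 1 - x)))
      = (∑ x ∈ Finset.range (m + 1),
          ∑ c ∈ Finset.range (2 ^ (m + 1 - x)), G (2 ^ x) (c : ℚ) (2 ^ (m + 1 - x)))
        + G (2 ^ (m + 1)) 0 1 := by
    rw [Finset.sum_range_succ]
    congr 1
    rw [Nat.sub_self]
    norm_num
  have hE1 : (∑ x ∈ Finset.range (m + 1 + 1),
        ∑ c ∈ Finset.range (2 ^ (m + 1 - x)),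
          G (2 ^ x) ((c : ℚ) + 1 / 2 * 2 ^ (m + 1 - x)) (2 ^ (m + 1 - x)))
      = (∑ x ∈ Finset.range (m + 1),
          ∑ c ∈ Finset.range (2 ^ (m + 1 - x)), G (2 ^ x) (c : ℚ) (2 ^ (m + 1 - x)))
        + G (2 ^ (m + 1)) (1 / 2) 1 := by
    rw [Finset.sum_range_succ]
    congr 1
    · apply Finset.sum_congr rfl
      intro x hx
      have hx' : x ≤ m := Nat.lt_succ_iff.mp (Finset.mem_range.mp hx)
      rw [show (2 : ℕ) ^ (m + 1 - x) = 2 * 2 ^ (m - x) by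
        rw [show m + 1 - x = (m - x) + 1 by omega, pow_succ, Nat.mul_comm]]
      rw [show ((1 : ℚ) / 2 * 2 ^ (m + 1 - x)) = (2 : ℚ) ^ (m - x) by
        rw [show m + 1 - x = (m - x) + 1 by omega]; ring]
      exact Hshift G hG (2 ^ x) ((2 : ℚ) ^ (m - x)) ((2 : ℚ) ^ (m + 1 - x)) (2 ^ (m - x))
        (by push_cast; ring)
        (by rw [show m + 1 - x = (m - x) + 1 by omega]; ring)
    · rw [Nat.sub_self]
      norm_num
  have hD2 : (∑ x ∈ Finset.range (m + 1),
        ∑ c ∈ Finset.range (2 ^ (m + 1 - x)), F (2 * 2 ^ x) (2 * ((c : ℚ) / 2)) (2 * 2 ^ (m - x)))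
      = (∑ x ∈ Finset.range (m + 1),
          ∑ c ∈ Finset.range (2 ^ (m + 1 - x)), F (2 * 2 ^ x) (c : ℚ) (2 * 2 ^ (m - x))) := by
    apply Finset.sum_congr rfl
    intro x _
    apply Finset.sum_congr rfl
    intro c _
    rw [show (2 : ℚ) * ((c : ℚ) / 2) = (c : ℚ) by ring]
  have hE2 : (∑ x ∈ Finset.range (m + 1),
        ∑ c ∈ Finset.range (2 ^ (m + 1 - x)),
          F (2 * 2 ^ x) (2 * ((c : ℚ) / 2 + 1 / 2 * 2 ^ (m - x))) (2 * 2 ^ (m - x)))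
      = (∑ x ∈ Finset.range (m + 1),
          ∑ c ∈ Finset.range (2 ^ (m + 1 - x)), F (2 * 2 ^ x) (c : ℚ) (2 * 2 ^ (m - x))) := by
    apply Finset.sum_congr rfl
    intro x hx
    have hx' : x ≤ m := Nat.lt_succ_iff.mp (Finset.mem_range.mp hx)
    rw [show (2 : ℕ) ^ (m + 1 - x) = 2 * 2 ^ (m - x) by
      rw [show m + 1 - x = (m - x) + 1 by omega, pow_succ, Nat.mul_comm]]
    rw [show (∑ c ∈ Finset.range (2 * 2 ^ (m - x)),
          F (2 * 2 ^ x) (2 * ((c : ℚ) / 2 + 1 / 2 * 2 ^ (m - x))) (2 * 2 ^ (m - x)))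
        = (∑ c ∈ Finset.range (2 * 2 ^ (m - x)),
          F (2 * 2 ^ x) ((c : ℚ) + (2 : ℚ) ^ (m - x)) (2 * 2 ^ (m - x))) from
      Finset.sum_congr rfl fun c _ => by
        rw [show (2 : ℚ) * ((c : ℚ) / 2 + 1 / 2 * 2 ^ (m - x)) = (c : ℚ) + (2 : ℚ) ^ (m - x) by
          ring]]
    exact Hshift F hF (2 * 2 ^ x) ((2 : ℚ) ^ (m - x)) (2 * (2 : ℚ) ^ (m - x)) (2 ^ (m - x))
      (by push_cast; ring) (by ring)
  have hC1 : (∑ x ∈ Finset.range (m + 1 + 1),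
        ∑ c ∈ Finset.range (2 ^ (m + 1 - x)), F (2 * 2 ^ x) (2 * (c : ℚ)) (2 ^ (m + 1 - x)))
      = 2 • (∑ x ∈ Finset.range (m + 1),
          ∑ c ∈ Finset.range (2 ^ (m - x)), F (2 * 2 ^ x) (2 * (c : ℚ)) (2 * 2 ^ (m - x)))
        + F (2 ^ (m + 1 + 1)) 0 1 := by
    rw [Finset.sum_range_succ]
    congr 1
    · rw [Finset.smul_sum]
      apply Finset.sum_congr rfl
      intro x hx
      have hx' : x ≤ m := Nat.lt_succ_iff.mp (Finset.mem_range.mp hx)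
      rw [show (2 : ℕ) ^ (m + 1 - x) = 2 * 2 ^ (m - x) by
        rw [show m + 1 - x = (m - x) + 1 by omega, pow_succ, Nat.mul_comm]]
      rw [Hdouble F hF (2 * 2 ^ x) 2 ((2 : ℚ) ^ (m + 1 - x)) (2 ^ (m - x))
        (by push_cast; rw [show m + 1 - x = (m - x) + 1 by omega]; ring)]
      congr 1
      apply Finset.sum_congr rfl
      intro c _
      rw [show ((2 : ℚ) ^ (m + 1 - x)) = 2 * 2 ^ (m - x) by
        rw [show m + 1 - x = (m - x) + 1 by omega]; ring]
    · rw [Nat.sub_self]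
      norm_num
      rw [show (2 : ℚ) * 2 ^ (m + 1) = 2 ^ (m + 1 + 1) by ring]
  have hC2 : (∑ x ∈ Finset.range (m + 1),
        ∑ c ∈ Finset.range (2 ^ (m + 1 - x)), G (2 * 2 ^ x) (2 * ((c : ℚ) / 2)) (2 ^ (m - x)))
      = 2 • (∑ x ∈ Finset.range m,
          ∑ c ∈ Finset.range (2 ^ (m - x)), G (2 * 2 ^ x) (2 * ((c : ℚ) / 2)) (2 * 2 ^ (m - 1 - x)))
        + 2 • G (2 ^ (m + 1)) 0 1 := by
    rw [Finset.sum_range_succ]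
    congr 1
    · rw [Finset.smul_sum]
      apply Finset.sum_congr rfl
      intro x hx
      have hx' : x < m := Finset.mem_range.mp hx
      rw [show (2 : ℕ) ^ (m + 1 - x) = 2 * 2 ^ (m - x) by
        rw [show m + 1 - x = (m - x) + 1 by omega, pow_succ, Nat.mul_comm]]
      rw [show (∑ c ∈ Finset.range (2 * 2 ^ (m - x)),
            G (2 * 2 ^ x) (2 * ((c : ℚ) / 2)) ((2 : ℚ) ^ (m - x)))
          = (∑ c ∈ Finset.range (2 * 2 ^ (m - x)),
            G (2 * 2 ^ x) (c : ℚ) ((2 : ℚ) ^ (m - x))) from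
        Finset.sum_congr rfl fun c _ => by
          rw [show (2 : ℚ) * ((c : ℚ) / 2) = (c : ℚ) by ring]]
      rw [Hdouble1 G hG (2 * 2 ^ x) ((2 : ℚ) ^ (m - x)) (2 ^ (m - x)) (by push_cast; ring)]
      congr 1
      apply Finset.sum_congr rfl
      intro c _
      rw [show (2 : ℚ) * ((c : ℚ) / 2) = (c : ℚ) by ring,
        show (2 : ℚ) * 2 ^ (m - 1 - x) = 2 ^ (m - x) by
          rw [show m - x = (m - 1 - x) + 1 by omega]; ring]
    · rw [show m + 1 - m = 1 by omega, Nat.sub_self, pow_one,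
        Finset.sum_range_succ, Finset.sum_range_one]
      have h10 : G (2 * 2 ^ m) 1 1 = G (2 * 2 ^ m) 0 1 := by
        have := hG (2 * 2 ^ m) 0 1
        rwa [zero_add] at this
      norm_num [h10, two_smul]
      rw [show (2 : ℚ) * 2 ^ m = 2 ^ (m + 1) by ring]
  rw [hR1, hR2, hD1, hE1, hD2, hE2, hC1, hC2]
  abel

end Core2

lemma slash_period1 (h : FormalSeries) (hsupp : IntSupported h) (s : ℝ) (u v y e' : ℚ) :
    slashA h s u (v + y) y e' = slashA h s u v y e' := by
  simpa using slash_period h hsupp s u v y 1 e'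

def T (k : ℕ) (h : FormalSeries) : FormalSeries :=
  (∑ a ∈ Finset.range (k + 1), ∑ v ∈ Finset.range (2 ^ (k - a)),
      slashA h 1 ((2 : ℚ) ^ a) (v : ℚ) ((2 : ℚ) ^ (k - a)))
  + ∑ a ∈ Finset.range k, ∑ v ∈ Finset.range (2 ^ (k - a)),
      slashA h (Real.sqrt 2) ((2 : ℚ) ^ a) ((v : ℚ) / 2) ((2 : ℚ) ^ (k - 1 - a))

lemma heckeT_eq (k : ℕ) (h : FormalSeries) : heckeT (2 ^ k) h = T k h := by
  rcases k with _ | j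
  · simp [heckeT, T, Nat.divisorsAntidiagonal_one]
  · unfold heckeT T
    congr 1
    · rw [sum_divAnti]
      apply Finset.sum_congr rfl
      intro a ha
      simp only [Nat.cast_pow, Nat.cast_ofNat]
    · rw [if_pos (by simp [Nat.even_pow]), show 2 ^ (j + 1) / 2 = 2 ^ j by
        rw [pow_succ, Nat.mul_div_cancel _ (by norm_num)], sum_divAnti]
      apply Finset.sum_congr rfl
      intro a ha
      simp only [Finset.mem_range, Nat.lt_succ_iff] at ha
      rw [show 2 * 2 ^ (j - a) = 2 ^ (j + 1 - a) by
        rw [Nat.succ_sub ha, pow_succ, mul_comm]]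
      simp only [Nat.cast_pow, Nat.cast_ofNat, Nat.succ_sub_one]

lemma T_add (k : ℕ) (g1 g2 : FormalSeries) : T k (g1 + g2) = T k g1 + T k g2 := by
  unfold T
  simp only [slash_add, Finset.sum_add_distrib]
  abel

lemma Tslash (k : ℕ) (h : FormalSeries) (s1 : ℝ) (u1 v1 y1 : ℚ) (hu1 : u1 ≠ 0) :
    T k (slashA h s1 u1 v1 y1)
      = (∑ a ∈ Finset.range (k + 1), ∑ v ∈ Finset.range (2 ^ (k - a)),
          slashA h s1 (u1 * 2 ^ a) (u1 * v + v1 * 2 ^ (k - a)) (y1 * 2 ^ (k - a)))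
      + ∑ a ∈ Finset.range k, ∑ v ∈ Finset.range (2 ^ (k - a)),
          slashA h (s1 * Real.sqrt 2) (u1 * 2 ^ a) (u1 * (v / 2) + v1 * 2 ^ (k - 1 - a))
            (y1 * 2 ^ (k - 1 - a)) := by
  unfold T
  refine congrArg₂ (· + ·)
    (Finset.sum_congr rfl fun a _ => Finset.sum_congr rfl fun v _ => ?_)
    (Finset.sum_congr rfl fun a _ => Finset.sum_congr rfl fun v _ => ?_)
  · rw [slash_slash _ _ _ _ _ _ _ _ _ hu1 (by positivity), mul_one]
  · rw [slash_slash _ _ _ _ _ _ _ _ _ hu1 (by positivity)]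

/-- For `n ≥ 1`, the generalized Hecke operators at the prime `2` satisfy
`T_{2^n} ∘ T_2 = T_{2^{n+1}} + 2·T_{2^n} ∘ Ψ_{√2} + 2·T_{2^{n-1}} ∘ Ψ_2`. -/
theorem heckeT_two_pow (n : ℕ) (hn : 1 ≤ n) (h : FormalSeries) (hsupp : IntSupported h) :
    heckeT (2 ^ n) (heckeT 2 h)
      = heckeT (2 ^ (n + 1)) h + 2 • heckeT (2 ^ n) (PsiSqrtTwo h)
        + 2 • heckeT (2 ^ (n - 1)) (PsiTwo h) := by
  obtain ⟨m, rfl⟩ : ∃ m, n = m + 1 := ⟨n - 1, (Nat.succ_pred_eq_of_pos hn).symm⟩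
  have h2 : heckeT 2 (h) = T 1 h := by
    have := heckeT_eq 1 h
    norm_num at this
    exact this
  rw [h2, heckeT_eq, heckeT_eq, heckeT_eq, Nat.add_sub_cancel, heckeT_eq m]
  have hT1 : T 1 h = slashA h 1 1 0 2 + slashA h 1 1 1 2 + slashA h 1 2 0 1
      + (slashA h (Real.sqrt 2) 1 0 1 + slashA h (Real.sqrt 2) 1 (1 / 2) 1) := by
    unfold T
    simp [Finset.sum_range_succ]
  rw [hT1, T_add, T_add, T_add, T_add]
  rw [show PsiSqrtTwo h = slashA h (Real.sqrt 2) 1 0 1 from rfl,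
    show PsiTwo h = slashA h 1 2 0 2 from rfl]
  rw [Tslash (m + 1) h 1 1 0 2 one_ne_zero, Tslash (m + 1) h 1 1 1 2 one_ne_zero,
    Tslash (m + 1) h 1 2 0 1 two_ne_zero, Tslash (m + 1) h (Real.sqrt 2) 1 0 1 one_ne_zero,
    Tslash (m + 1) h (Real.sqrt 2) 1 (1 / 2) 1 one_ne_zero, Tslash m h 1 2 0 2 two_ne_zero]
  have hsq : Real.sqrt 2 * Real.sqrt 2 = (2 : ℝ) := Real.mul_self_sqrt (by norm_num)
  simp only [T, one_mul, mul_one, zero_mul, add_zero, hsq, slash_two, Nat.add_sub_cancel]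
  funext e'
  simp only [Pi.add_apply, Finset.sum_apply, Pi.smul_apply]
  exact coreId (fun u v y => slashA h 1 u v y e') (fun u v y => slashA h (Real.sqrt 2) u v y e')
    (fun u v y => slash_period1 h hsupp 1 u v y e')
    (fun u v y => slash_period1 h hsupp (Real.sqrt 2) u v y e') m
end
end

section
/- Suppose f(q) = q^{-1} + Σ_{k≥1} a_k q^k is completely (2+)-replicable with replicates f^{[2]}, f^{[√2]} having coefficients a_k^{[2]}, a_k^{[√2]}. Then for every k ≥ 1: a_{4k} = a_{2k+1} + Σ_{j=1}^{k-1} a_j·a_{2k-j} + (1/2)·(a_k² − a_k^{[2]}) − a_{2k}^{[√2]}. -/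
noncomputable section

/-- Formal `q`-series with rational coefficients (Laurent series in `q`). -/
abbrev Ser := LaurentSeries ℚ

/-- `f = q⁻¹ + Σ_{k≥1} a_k q^k`: the coefficient of `q⁻¹` is `1` and all other
coefficients in non-positive degrees vanish. -/
def IsNormalized (f : Ser) : Prop :=
  f.coeff (-1) = 1 ∧ ∀ k : ℤ, k ≤ 0 → k ≠ -1 → f.coeff k = 0

/-- `P` is the `n`-th Faber polynomial of `f`: the unique monic polynomial of degree
`n` such that `P(f(q)) − q^{-n}` has only positive powers of `q`. -/
def IsFaber (f : Ser) (n : ℕ) (P : Polynomial ℚ) : Prop :=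
  P.Monic ∧ P.natDegree = n ∧
  (Polynomial.aeval f P).coeff (-(n : ℤ)) = 1 ∧
  ∀ k : ℤ, k ≤ 0 → k ≠ -(n : ℤ) → (Polynomial.aeval f P).coeff k = 0

/-- The coefficient of `q^k` in the left-hand side
`Σ_{ad=n, 0≤b<d} f^{[a]}((aτ+b)/d) + Σ_{ad=n, d even, 0≤b<d} f^{[a√2]}((2aτ+b)/d)`
of the `(2+)`-replication identity, where `F a` is the series `f^{[a]}` and `G a`
is the series `f^{[a√2]}`. -/
def RepLHS (F G : ℕ → Ser) (n : ℕ) (k : ℤ) : ℚ :=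
  (∑ x ∈ n.divisorsAntidiagonal,
    if (x.1 : ℤ) ∣ k then (x.2 : ℚ) * (F x.1).coeff ((x.2 : ℤ) * k / (x.1 : ℤ)) else 0)
  + (∑ x ∈ n.divisorsAntidiagonal,
    if Even x.2 ∧ (2 * (x.1 : ℤ)) ∣ k then
      (x.2 : ℚ) * (G x.1).coeff ((x.2 : ℤ) * k / (2 * (x.1 : ℤ))) else 0)

/-- The `(2+)`-replication identity of index `n` for `f` with replicates
`F a = f^[a]`, `G a = f^[a√2]`, expressed on `q`-expansion coefficients:
`Σ_{ad=n, 0≤b<d} f^{[a]}((aτ+b)/d) + Σ_{ad=n, d even, 0≤b<d} f^{[a√2]}((2aτ+b)/d)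
  = P_{n,f}(f(τ))`. -/
def RepEq (F G : ℕ → Ser) (f : Ser) (n : ℕ) : Prop :=
  ∀ P : Polynomial ℚ, IsFaber f n P →
    ∀ k : ℤ, RepLHS F G n k = (Polynomial.aeval f P).coeff k

/-- Multiplication on the index set `ℕ ∪ √2·ℕ`, encoding `(n, b)` as `n·(√2)^b`:
`(√2·n)·(√2·m) = 2nm`. -/
def indexMul (r s : ℕ × Bool) : ℕ × Bool :=
  (r.1 * s.1 * (if r.2 ∧ s.2 then 2 else 1), xor r.2 s.2)

/-- `Φ` is a completely `(2+)`-replicable system: `Φ r` is the replicate `f^{[r]}` for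
`r ∈ ℕ ∪ √2·ℕ`, and every `Φ r` is `(2+)`-replicable with `(Φ r)^{[m]} = Φ (r·m)`. -/
def IsCR2System (Φ : ℕ × Bool → Ser) : Prop :=
  ∀ r : ℕ × Bool, 1 ≤ r.1 → ∀ n : ℕ, 1 ≤ n →
    RepEq (fun a => Φ (indexMul r (a, false))) (fun a => Φ (indexMul r (a, true))) (Φ r) n

/-- `f` is completely `(2+)`-replicable. -/
def Completely2PlusReplicable (f : Ser) : Prop :=
  ∃ Φ : ℕ × Bool → Ser, Φ (1, false) = f ∧ IsCR2System Φ

lemma single_neg_one_mul_coeff (x : Ser) (k : ℤ) :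
    (HahnSeries.single (-1 : ℤ) (1 : ℚ) * x).coeff k = x.coeff (k + 1) := by
  have h := HahnSeries.coeff_single_mul_add (r := (1:ℚ)) (x := x) (a := k + 1) (b := (-1:ℤ))
  simpa using h

lemma mul_single_neg_one_coeff (x : Ser) (k : ℤ) :
    (x * HahnSeries.single (-1 : ℤ) (1 : ℚ)).coeff k = x.coeff (k + 1) := by
  have h := HahnSeries.coeff_mul_single_add (r := (1:ℚ)) (x := x) (a := k + 1) (b := (-1:ℤ))
  simpa using h

lemma mul_coeff_pos (h : Ser) (hs : ∀ k : ℤ, k ≤ 0 → h.coeff k = 0) (m : ℤ) :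
    (h * h).coeff m = ∑ j ∈ Finset.Icc (1:ℤ) (m-1), h.coeff j * h.coeff (m - j) := by
  have hsupp : ∀ x : ℤ, x ∈ h.support → 1 ≤ x := by
    intro x hx
    by_contra hc
    exact hx (hs x (by omega))
  have hsub : Finset.antidiagonal h.isPWO_support h.isPWO_support m ⊆
      (Finset.Icc (1:ℤ) (m-1)).image (fun j => (j, m - j)) := by
    intro ij hij
    rw [Finset.mem_antidiagonal] at hij
    obtain ⟨h1, h2, h3⟩ := hij
    have g1 := hsupp _ h1
    have g2 := hsupp _ h2
    rw [Finset.mem_image]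
    refine ⟨ij.1, Finset.mem_Icc.2 (by omega), ?_⟩
    have he : m - ij.1 = ij.2 := by omega
    rw [he]
  have hzero : ∀ ij ∈ (Finset.Icc (1:ℤ) (m-1)).image (fun j => (j, m - j)),
      ij ∉ Finset.antidiagonal h.isPWO_support h.isPWO_support m →
      h.coeff ij.1 * h.coeff ij.2 = 0 := by
    intro ij hin hout
    rw [Finset.mem_image] at hin
    obtain ⟨j, hj, rfl⟩ := hin
    rw [Finset.mem_antidiagonal] at hout
    simp only [not_and] at hout
    by_cases h1 : (j : ℤ) ∈ h.support
    · by_cases h2 : (m - j : ℤ) ∈ h.support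
      · exact absurd (by omega) (hout h1 h2)
      · simp only [HahnSeries.mem_support, not_not] at h2
        simp [h2]
    · simp only [HahnSeries.mem_support, not_not] at h1
      simp [h1]
  rw [HahnSeries.coeff_mul, Finset.sum_subset hsub hzero,
    Finset.sum_image (fun a _ b _ hab => congrArg Prod.fst hab)]

lemma algebraMap_coeff (c : ℚ) (m : ℤ) :
    ((algebraMap ℚ Ser) c).coeff m = if m = 0 then c else 0 := by
  rw [HahnSeries.algebraMap_apply', PowerSeries.algebraMap_apply,
    HahnSeries.ofPowerSeries_C, HahnSeries.C_apply, HahnSeries.coeff_single]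
  simp

lemma normalized_sub_coeff (f : Ser) (hf : IsNormalized f) :
    ∀ k : ℤ, k ≤ 0 → (f - HahnSeries.single (-1 : ℤ) (1 : ℚ)).coeff k = 0 := by
  intro k hk
  rw [HahnSeries.coeff_sub, HahnSeries.coeff_single]
  by_cases h : k = -1
  · simp [h, hf.1]
  · simp [h, hf.2 k hk h]

lemma normalized_sub_coeff_pos (f : Ser) (j : ℤ) (hj : 1 ≤ j) :
    (f - HahnSeries.single (-1 : ℤ) (1 : ℚ)).coeff j = f.coeff j := by
  rw [HahnSeries.coeff_sub, HahnSeries.coeff_single, if_neg (by omega)]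
  ring

lemma aeval2_coeff (f : Ser) (hf : IsNormalized f) (m : ℤ) :
    (Polynomial.aeval f (Polynomial.X ^ 2 - Polynomial.C (2 * f.coeff 1))).coeff m
      = (if m = -2 then 1 else 0) - (if m = 0 then 2 * f.coeff 1 else 0)
        + 2 * (f - HahnSeries.single (-1 : ℤ) (1 : ℚ)).coeff (m + 1)
        + ∑ j ∈ Finset.Icc (1:ℤ) (m-1),
            (f - HahnSeries.single (-1 : ℤ) (1 : ℚ)).coeff j
              * (f - HahnSeries.single (-1 : ℤ) (1 : ℚ)).coeff (m - j) := by
  set h : Ser := f - HahnSeries.single (-1 : ℤ) (1 : ℚ) with hh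
  have hfh : f = HahnSeries.single (-1 : ℤ) (1 : ℚ) + h := by rw [hh]; ring
  have hs : ∀ k : ℤ, k ≤ 0 → h.coeff k = 0 := normalized_sub_coeff f hf
  have expand : f * f = HahnSeries.single (-2 : ℤ) (1 : ℚ)
      + HahnSeries.single (-1 : ℤ) (1 : ℚ) * h + h * HahnSeries.single (-1 : ℤ) (1 : ℚ)
      + h * h := by
    rw [hfh]
    rw [add_mul, mul_add, mul_add, HahnSeries.single_mul_single]
    norm_num
    ring
  rw [map_sub, map_pow, Polynomial.aeval_X, Polynomial.aeval_C, HahnSeries.coeff_sub, pow_two,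
    expand]
  simp only [HahnSeries.coeff_add, single_neg_one_mul_coeff, mul_single_neg_one_coeff,
    mul_coeff_pos h hs, HahnSeries.coeff_single, algebraMap_coeff]
  split_ifs <;> ring

lemma aeval2_coeff_pos (f : Ser) (hf : IsNormalized f) (m : ℤ) (hm : 1 ≤ m) :
    (Polynomial.aeval f (Polynomial.X ^ 2 - Polynomial.C (2 * f.coeff 1))).coeff m
      = 2 * f.coeff (m + 1) + ∑ j ∈ Finset.Icc (1:ℤ) (m-1), f.coeff j * f.coeff (m - j) := by
  rw [aeval2_coeff f hf, if_neg (by omega), if_neg (by omega),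
    normalized_sub_coeff_pos f (m+1) (by omega)]
  have hsum : (∑ j ∈ Finset.Icc (1:ℤ) (m-1),
      (f - HahnSeries.single (-1 : ℤ) (1 : ℚ)).coeff j
        * (f - HahnSeries.single (-1 : ℤ) (1 : ℚ)).coeff (m - j))
      = ∑ j ∈ Finset.Icc (1:ℤ) (m-1), f.coeff j * f.coeff (m - j) := by
    apply Finset.sum_congr rfl
    intro j hj
    rw [Finset.mem_Icc] at hj
    rw [normalized_sub_coeff_pos f j hj.1, normalized_sub_coeff_pos f (m-j) (by omega)]
  rw [hsum]
  ring

lemma faber_two (f : Ser) (hf : IsNormalized f) :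
    IsFaber f 2 (Polynomial.X ^ 2 - Polynomial.C (2 * f.coeff 1)) := by
  have hs := normalized_sub_coeff f hf
  refine ⟨Polynomial.monic_X_pow_sub_C _ (by norm_num),
    Polynomial.natDegree_X_pow_sub_C, ?_, ?_⟩
  · have h2 : -((2:ℕ):ℤ) = -2 := by norm_num
    rw [h2, aeval2_coeff f hf, if_pos rfl, if_neg (by omega), hs (-2 + 1) (by omega)]
    rw [Finset.Icc_eq_empty (by omega), Finset.sum_empty]
    norm_num
  · intro m hm hne
    have hne2 : m ≠ -2 := by
      intro h; apply hne; rw [h]; norm_num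
    rw [aeval2_coeff f hf, if_neg hne2, Finset.Icc_eq_empty (by omega), Finset.sum_empty]
    by_cases h0 : m = 0
    · subst h0
      rw [if_pos rfl, normalized_sub_coeff_pos f (0+1) (by omega)]
      norm_num
    · rw [if_neg h0, hs (m+1) (by omega)]
      ring

lemma sum_split (a : ℤ → ℚ) (K : ℤ) (hK : 1 ≤ K) :
    ∑ j ∈ Finset.Icc (1:ℤ) (2*K-1), a j * a (2*K - j)
      = a K * a K + 2 * ∑ j ∈ Finset.Icc (1:ℤ) (K-1), a j * a (2*K - j) := by
  have h1 : Finset.Icc (1:ℤ) (2*K-1)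
      = Finset.Icc 1 (K-1) ∪ insert K (Finset.Icc (K+1) (2*K-1)) := by
    ext x
    simp only [Finset.mem_Icc, Finset.mem_union, Finset.mem_insert]
    omega
  have hdisj : Disjoint (Finset.Icc (1:ℤ) (K-1)) (insert K (Finset.Icc (K+1) (2*K-1))) := by
    rw [Finset.disjoint_left]
    intro x hx hx2
    simp only [Finset.mem_Icc, Finset.mem_insert] at hx hx2
    omega
  have hnot : K ∉ Finset.Icc (K+1) (2*K-1) := by
    simp only [Finset.mem_Icc]
    omega
  have h2 : ∑ j ∈ Finset.Icc (K+1) (2*K-1), a j * a (2*K - j)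
      = ∑ j ∈ Finset.Icc (1:ℤ) (K-1), a j * a (2*K - j) := by
    refine Finset.sum_nbij' (i := fun j => 2*K - j) (j := fun j => 2*K - j) ?_ ?_ ?_ ?_ ?_
    · intro x hx; simp only [Finset.mem_Icc] at *; omega
    · intro x hx; simp only [Finset.mem_Icc] at *; omega
    · intro x hx; omega
    · intro x hx; omega
    · intro x hx
      have h9 : 2*K - (2*K - x) = x := by omega
      rw [h9]
      ring
  rw [h1, Finset.sum_union hdisj, Finset.sum_insert hnot, h2]
  have h3 : 2*K - K = K := by ring
  rw [h3]
  ring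

lemma sum_cast (a : ℤ → ℚ) (n : ℕ) :
    ∑ j ∈ Finset.Icc (1:ℕ) n, a (j:ℤ) = ∑ j ∈ Finset.Icc (1:ℤ) (n:ℤ), a j := by
  refine Finset.sum_nbij' (i := fun j : ℕ => (j:ℤ)) (j := fun j : ℤ => j.toNat) ?_ ?_ ?_ ?_ ?_
  · intro x hx; simp only [Finset.mem_Icc] at *; omega
  · intro x hx; simp only [Finset.mem_Icc] at *; omega
  · intro x hx; omega
  · intro x hx; simp only [Finset.mem_Icc] at hx; omega
  · intro x hx; rfl

/-- If `f = Φ(1) = q⁻¹ + Σ a_k q^k` is completely `(2+)`-replicable, with replicates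
`f^{[2]} = Φ(2)` and `f^{[√2]} = Φ(√2)` having coefficients `a_k^{[2]}`, `a_k^{[√2]}`,
then for every `k ≥ 1`:
`a_{4k} = a_{2k+1} + Σ_{j=1}^{k-1} a_j·a_{2k-j} + (1/2)(a_k² − a_k^{[2]}) − a_{2k}^{[√2]}`. -/
theorem coeff_four_k (Φ : ℕ × Bool → Ser) (hsys : IsCR2System Φ)
    (hnorm : ∀ r : ℕ × Bool, 1 ≤ r.1 → IsNormalized (Φ r)) (k : ℕ) (hk : 1 ≤ k) :
    (Φ (1, false)).coeff (4 * (k : ℤ))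
      = (Φ (1, false)).coeff (2 * (k : ℤ) + 1)
        + (∑ j ∈ Finset.Icc 1 (k - 1),
            (Φ (1, false)).coeff (j : ℤ) * (Φ (1, false)).coeff (2 * (k : ℤ) - (j : ℤ)))
        + (1 / 2) * ((Φ (1, false)).coeff (k : ℤ) ^ 2 - (Φ (2, false)).coeff (k : ℤ))
        - (Φ (1, true)).coeff (2 * (k : ℤ)) := by
  have hf : IsNormalized (Φ (1, false)) := hnorm (1, false) le_rfl
  have hP := faber_two (Φ (1, false)) hf
  have hrep := hsys (1, false) le_rfl 2 (by norm_num) _ hP (2 * (k : ℤ))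
  have hdiv : (2:ℕ).divisorsAntidiagonal = {(1,2),(2,1)} := by decide
  rw [RepLHS, hdiv, Finset.sum_pair (by decide), Finset.sum_pair (by decide)] at hrep
  have hi1 : indexMul (1, false) (1, false) = (1, false) := by decide
  have hi2 : indexMul (1, false) (2, false) = (2, false) := by decide
  have hi3 : indexMul (1, false) (1, true) = (1, true) := by decide
  simp only [hi1, hi2, hi3] at hrep
  rw [if_pos (by norm_num : ((1:ℕ):ℤ) ∣ 2 * (k:ℤ)),
    if_pos (by norm_num : ((2:ℕ):ℤ) ∣ 2 * (k:ℤ)),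
    if_pos ⟨by decide, by norm_num⟩,
    if_neg (by simp : ¬ (Even 1 ∧ (2 * ((2:ℕ):ℤ)) ∣ 2 * (k:ℤ)))] at hrep
  have e1 : ((2:ℕ):ℤ) * (2 * (k:ℤ)) / ((1:ℕ):ℤ) = 4 * (k:ℤ) := by
    push_cast; omega
  have e2 : ((1:ℕ):ℤ) * (2 * (k:ℤ)) / ((2:ℕ):ℤ) = (k:ℤ) := by
    push_cast; omega
  have e3 : ((2:ℕ):ℤ) * (2 * (k:ℤ)) / (2 * ((1:ℕ):ℤ)) = 2 * (k:ℤ) := by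
    push_cast; omega
  rw [e1, e2, e3, aeval2_coeff_pos (Φ (1, false)) hf (2 * (k:ℤ)) (by omega)] at hrep
  have hKcast : 2 * (k:ℤ) + 1 = 2 * (k:ℤ) + 1 := rfl
  rw [sum_split (fun j => (Φ (1, false)).coeff j) (k:ℤ) (by exact_mod_cast hk)] at hrep
  have hsumeq : ∑ j ∈ Finset.Icc 1 (k - 1),
      (Φ (1, false)).coeff (j : ℤ) * (Φ (1, false)).coeff (2 * (k : ℤ) - (j : ℤ))
      = ∑ j ∈ Finset.Icc (1:ℤ) ((k:ℤ) - 1),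
      (Φ (1, false)).coeff j * (Φ (1, false)).coeff (2 * (k : ℤ) - j) := by
    have hc : ((k-1:ℕ):ℤ) = (k:ℤ) - 1 := by omega
    rw [sum_cast (fun j => (Φ (1, false)).coeff j * (Φ (1, false)).coeff (2 * (k : ℤ) - j))
      (k - 1), hc]
  rw [hsumeq]
  push_cast at hrep
  nlinarith [hrep, sq_nonneg ((Φ (1, false)).coeff (k:ℤ))]
end
end
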